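/- Let φ : R → Q be an injective ring epimorphism with Tor_1^R(Q, Q) = 0 and K = Q/φ(R). Then for every right R-module M, the right R-module Hom_R(K, M) is both Matlis-cotorsion and h-reduced, i.e., Ext^1_R(Q, Hom_R(K, M)) = 0 and Hom_R(Q, Hom_R(K, M)) = 0. -/

import Mathlib

open MulOpposite

universe u

/-- `φ : R →+* Q` is an epimorphism in the category of rings. -/
def IsRingEpi {R Q : Type u} [Ring R] [Ring Q] (φ : R →+* Q) : Prop :=
  ∀ (T : Type u) [Ring T] (ψ ω : Q →+* T), ψ.comp φ = ω.comp φ → ψ = ω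

section NCTensor

variable (R : Type u) [Ring R] (M : Type u) [AddCommGroup M] [Module Rᵐᵒᵖ M]
  (N : Type u) [AddCommGroup N] [Module R N]

/-- Relations defining the tensor product `M ⊗_R N` of a right `R`-module `M`
and a left `R`-module `N` over a (possibly noncommutative) ring `R`. -/
def ncRels : AddSubgroup (FreeAbelianGroup (M × N)) :=
  AddSubgroup.closure
    ({x | ∃ m m' n, x = FreeAbelianGroup.of (m + m', n) - FreeAbelianGroup.of (m, n) -
        FreeAbelianGroup.of (m', n)} ∪
     {x | ∃ m n n', x = FreeAbelianGroup.of (m, n + n') - FreeAbelianGroup.of (m, n) -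
        FreeAbelianGroup.of (m, n')} ∪
     {x | ∃ (r : R) (m : M) (n : N), x = FreeAbelianGroup.of (op r • m, n) -
        FreeAbelianGroup.of (m, r • n)})

/-- The tensor product `M ⊗_R N` of a right `R`-module and a left `R`-module over a
(possibly noncommutative) ring `R`, as an abelian group. -/
def NCTensor : Type u := FreeAbelianGroup (M × N) ⧸ ncRels R M N

instance : AddCommGroup (NCTensor R M N) :=
  QuotientAddGroup.Quotient.addCommGroup _

/-- The pure tensor `m ⊗ n` in `M ⊗_R N`. -/
def NCTensor.tmul (m : M) (n : N) : NCTensor R M N :=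
  QuotientAddGroup.mk (FreeAbelianGroup.of (m, n))

end NCTensor

/-- `Tor_1^R(X, N) = 0`, for a right `R`-module `X` and a left `R`-module `N`:
for every presentation `0 → A → B → X → 0` of `X` with `B` projective, the induced map
`A ⊗_R N → B ⊗_R N` is injective. -/
def Tor1Zero (R : Type u) [Ring R] (X : Type u) [AddCommGroup X] [Module Rᵐᵒᵖ X]
    (N : Type u) [AddCommGroup N] [Module R N] : Prop :=
  ∀ (A B : Type u) [AddCommGroup A] [AddCommGroup B] [Module Rᵐᵒᵖ A] [Module Rᵐᵒᵖ B]
    (i : A →ₗ[Rᵐᵒᵖ] B) (p : B →ₗ[Rᵐᵒᵖ] X),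
    Module.Projective Rᵐᵒᵖ B → Function.Injective i → Function.Surjective p →
    LinearMap.range i = LinearMap.ker p →
    ∀ g : NCTensor R A N →+ NCTensor R B N,
      (∀ a n, g (NCTensor.tmul R A N a n) = NCTensor.tmul R B N (i a) n) →
      Function.Injective g

open CategoryTheory in
/-- The Ext group `Ext^n_A(M, N)` for modules over an arbitrary ring `A`,
computed in the abelian category of `A`-modules. -/
noncomputable abbrev extGroup (A : Type u) [Ring A] (n : ℕ) (M : Type u) [AddCommGroup M]
    [Module A M] (N : Type u) [AddCommGroup N] [Module A N] : Type u :=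
  ((Ext ℤ (ModuleCat.{u} A) n).obj (Opposite.op (ModuleCat.of A M))).obj (ModuleCat.of A N)

section Kmod

variable {R Q : Type u} [Ring R] [Ring Q] (φ : R →+* Q) [Module Rᵐᵒᵖ Q]
  (hr : ∀ (r : R) (q : Q), op r • q = q * φ r)

/-- The image of `φ`, as a submodule of the right `R`-module `Q`. -/
def phiRange : Submodule Rᵐᵒᵖ Q where
  carrier := Set.range φ
  add_mem' := by rintro x y ⟨a, rfl⟩ ⟨b, rfl⟩; exact ⟨a + b, map_add φ a b⟩
  zero_mem' := ⟨0, map_zero φ⟩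
  smul_mem' := by
    rintro c x ⟨a, rfl⟩
    refine ⟨a * c.unop, ?_⟩
    rw [map_mul]
    conv_rhs => rw [← MulOpposite.op_unop c, hr]

/-- `K = Q/φ(R)` as a right `R`-module. -/
abbrev Kmod := Q ⧸ phiRange φ hr

end Kmod

section Kleft

variable {R Q : Type u} [Ring R] [Ring Q] (φ : R →+* Q) [Module Rᵐᵒᵖ Q]
  (hr : ∀ (r : R) (q : Q), op r • q = q * φ r)

/-- Left multiplication by `φ r` on `Q`, as an endomorphism of the right `R`-module `Q`. -/
def lmulQ (r : R) : Q →ₗ[Rᵐᵒᵖ] Q where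
  toFun q := φ r * q
  map_add' := mul_add _
  map_smul' := by
    intro c q
    simp only [RingHom.id_apply]
    conv_lhs => rw [← MulOpposite.op_unop c, hr]
    conv_rhs => rw [← MulOpposite.op_unop c, hr]
    rw [mul_assoc]

/-- Left multiplication by `φ r` on `K = Q/φ(R)`. -/
def lK (r : R) : Kmod φ hr →ₗ[Rᵐᵒᵖ] Kmod φ hr :=
  Submodule.mapQ _ _ (lmulQ φ hr r) (by
    rintro x ⟨a, rfl⟩
    exact ⟨r * a, by simp [lmulQ, map_mul]⟩)

/-- The left `R`-module structure on `K = Q/φ(R)` induced by left multiplication. -/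
def KleftModule : Module R (Kmod φ hr) :=
  letI : SMul R (Kmod φ hr) := ⟨fun r k => lK φ hr r k⟩
  Module.ofMinimalAxioms
    (fun r x y => map_add (lK φ hr r) x y)
    (fun r s x => by
      obtain ⟨q, rfl⟩ := Submodule.Quotient.mk_surjective _ x
      show lK φ hr (r + s) (Submodule.Quotient.mk q) = _
      simp only [lK, Submodule.mapQ_apply, lmulQ, LinearMap.coe_mk, AddHom.coe_mk, map_add,
        add_mul]
      rfl)
    (fun r s x => by
      obtain ⟨q, rfl⟩ := Submodule.Quotient.mk_surjective _ x
      show lK φ hr (r * s) (Submodule.Quotient.mk q) = lK φ hr r (lK φ hr s _)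
      simp only [lK, Submodule.mapQ_apply, lmulQ, LinearMap.coe_mk, AddHom.coe_mk, map_mul,
        mul_assoc])
    (fun x => by
      obtain ⟨q, rfl⟩ := Submodule.Quotient.mk_surjective _ x
      show lK φ hr 1 (Submodule.Quotient.mk q) = _
      simp [lK, Submodule.mapQ_apply, lmulQ])

end Kleft

section HomMod

variable {R Q : Type u} [Ring R] [Ring Q] (φ : R →+* Q) [Module Rᵐᵒᵖ Q]
  (hr : ∀ (r : R) (q : Q), op r • q = q * φ r)
  (M : Type u) [AddCommGroup M] [Module Rᵐᵒᵖ M]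

/-- The right `R`-module structure on `Hom_R(K, M)` coming from the left action of `R` on `K`. -/
def homModule : Module Rᵐᵒᵖ (Kmod φ hr →ₗ[Rᵐᵒᵖ] M) :=
  letI : SMul Rᵐᵒᵖ (Kmod φ hr →ₗ[Rᵐᵒᵖ] M) := ⟨fun c f => f.comp (lK φ hr c.unop)⟩
  Module.ofMinimalAxioms
    (fun c f g => by
      refine LinearMap.ext fun k => ?_
      rfl)
    (fun c d f => by
      show f.comp (lK φ hr (c + d).unop) = f.comp (lK φ hr c.unop) + f.comp (lK φ hr d.unop)
      refine LinearMap.ext fun k => ?_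
      obtain ⟨q, rfl⟩ := Submodule.Quotient.mk_surjective _ k
      simp [lK, Submodule.mapQ_apply, lmulQ, MulOpposite.unop_add, map_add, add_mul])
    (fun c d f => by
      show f.comp (lK φ hr (c * d).unop) = (f.comp (lK φ hr d.unop)).comp (lK φ hr c.unop)
      refine LinearMap.ext fun k => ?_
      obtain ⟨q, rfl⟩ := Submodule.Quotient.mk_surjective _ k
      simp [lK, Submodule.mapQ_apply, lmulQ, map_mul, mul_assoc])
    (fun f => by
      show f.comp (lK φ hr (1 : Rᵐᵒᵖ).unop) = f
      refine LinearMap.ext fun k => ?_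
      obtain ⟨q, rfl⟩ := Submodule.Quotient.mk_surjective _ k
      simp [lK, Submodule.mapQ_apply, lmulQ])

end HomMod

section NCAPI

variable {R : Type u} [Ring R] {M : Type u} [AddCommGroup M] [Module Rᵐᵒᵖ M]
  {N : Type u} [AddCommGroup N] [Module R N]

namespace NCTensor

lemma mk_eq_mk {a b : FreeAbelianGroup (M × N)} (h : a - b ∈ ncRels R M N) :
    (QuotientAddGroup.mk a : NCTensor R M N) = QuotientAddGroup.mk b :=
  QuotientAddGroup.eq_iff_sub_mem.mpr h

lemma add_tmul (m m' : M) (n : N) :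
    tmul R M N (m + m') n = tmul R M N m n + tmul R M N m' n := by
  show _ = (QuotientAddGroup.mk (FreeAbelianGroup.of (m, n) + FreeAbelianGroup.of (m', n)) :
    NCTensor R M N)
  refine mk_eq_mk ?_
  refine AddSubgroup.subset_closure (Set.mem_union_left _ (Set.mem_union_left _ ⟨m, m', n, ?_⟩))
  abel

lemma tmul_add (m : M) (n n' : N) :
    tmul R M N m (n + n') = tmul R M N m n + tmul R M N m n' := by
  show _ = (QuotientAddGroup.mk (FreeAbelianGroup.of (m, n) + FreeAbelianGroup.of (m, n')) :
    NCTensor R M N)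
  refine mk_eq_mk ?_
  refine AddSubgroup.subset_closure (Set.mem_union_left _ (Set.mem_union_right _ ⟨m, n, n', ?_⟩))
  abel

lemma smul_tmul (r : R) (m : M) (n : N) :
    tmul R M N (op r • m) n = tmul R M N m (r • n) := by
  refine mk_eq_mk ?_
  exact AddSubgroup.subset_closure (Set.mem_union_right _ ⟨r, m, n, rfl⟩)

lemma zero_tmul (n : N) : tmul R M N 0 n = 0 := by
  have := add_tmul (R := R) (0 : M) 0 n
  rw [add_zero] at this
  exact left_eq_add.mp this

lemma tmul_zero (m : M) : tmul R M N m 0 = 0 := by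
  have := tmul_add (R := R) m (0 : N) 0
  rw [add_zero] at this
  exact left_eq_add.mp this

lemma neg_tmul (m : M) (n : N) : tmul R M N (-m) n = -tmul R M N m n := by
  rw [eq_neg_iff_add_eq_zero, ← add_tmul, neg_add_cancel, zero_tmul]

lemma tmul_neg (m : M) (n : N) : tmul R M N m (-n) = -tmul R M N m n := by
  rw [eq_neg_iff_add_eq_zero, ← tmul_add, neg_add_cancel, tmul_zero]

lemma sub_tmul (m m' : M) (n : N) :
    tmul R M N (m - m') n = tmul R M N m n - tmul R M N m' n := by
  rw [sub_eq_add_neg, sub_eq_add_neg, add_tmul, neg_tmul]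

lemma tmul_sub (m : M) (n n' : N) :
    tmul R M N m (n - n') = tmul R M N m n - tmul R M N m n' := by
  rw [sub_eq_add_neg, sub_eq_add_neg, tmul_add, tmul_neg]

/-- universal property -/
def lift {A : Type*} [AddCommGroup A] (b : M → N → A)
    (hba : ∀ m m' n, b (m + m') n = b m n + b m' n)
    (hbn : ∀ m n n', b m (n + n') = b m n + b m n')
    (hbr : ∀ (r : R) m n, b (op r • m) n = b m (r • n)) :
    NCTensor R M N →+ A :=
  QuotientAddGroup.lift _ (FreeAbelianGroup.lift fun p => b p.1 p.2) (by
    rw [ncRels, AddSubgroup.closure_le]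
    rintro x ((⟨m, m', n, rfl⟩ | ⟨m, n, n', rfl⟩) | ⟨r, m, n, rfl⟩) <;>
      simp [AddMonoidHom.mem_ker, FreeAbelianGroup.lift_apply_of, hba, hbn, hbr])

@[simp] lemma lift_tmul {A : Type*} [AddCommGroup A] (b : M → N → A)
    (hba) (hbn) (hbr) (m : M) (n : N) :
    lift (R := R) b hba hbn hbr (tmul R M N m n) = b m n := by
  show QuotientAddGroup.lift _ _ _ (QuotientAddGroup.mk _) = _
  rw [QuotientAddGroup.lift_mk]
  exact FreeAbelianGroup.lift_apply_of _ _

lemma inductionOn {motive : NCTensor R M N → Prop} (x : NCTensor R M N)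
    (zero : motive 0) (tm : ∀ m n, motive (tmul R M N m n))
    (neg : ∀ y, motive y → motive (-y))
    (add : ∀ y z, motive y → motive z → motive (y + z)) : motive x := by
  obtain ⟨a, rfl⟩ := QuotientAddGroup.mk_surjective x
  induction a using FreeAbelianGroup.induction_on with
  | zero => exact zero
  | of p => exact tm p.1 p.2
  | neg p _ => exact neg _ (tm p.1 p.2)
  | add a b ha hb => exact add _ _ ha hb

lemma hom_eq {A : Type*} [AddCommGroup A] {f g : NCTensor R M N →+ A}
    (h : ∀ m n, f (tmul R M N m n) = g (tmul R M N m n)) (x : NCTensor R M N) : f x = g x := by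
  induction x using inductionOn with
  | zero => simp
  | tm m n => exact h m n
  | neg y hy => simp [hy]
  | add y z hy hz => simp [hy, hz]

/-- functoriality in the first (right-module) variable -/
def map₁ {M' : Type u} [AddCommGroup M'] [Module Rᵐᵒᵖ M'] (α : M →ₗ[Rᵐᵒᵖ] M') :
    NCTensor R M N →+ NCTensor R M' N :=
  lift (fun m n => tmul R M' N (α m) n)
    (fun m m' n => by rw [map_add, add_tmul])
    (fun m n n' => by rw [tmul_add])
    (fun r m n => by rw [map_smul, smul_tmul])

@[simp] lemma map₁_tmul {M' : Type u} [AddCommGroup M'] [Module Rᵐᵒᵖ M'] (α : M →ₗ[Rᵐᵒᵖ] M')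
    (m : M) (n : N) : map₁ (N := N) α (tmul R M N m n) = tmul R M' N (α m) n :=
  lift_tmul _ _ _ _ _ _

/-- functoriality in the second (left-module) variable -/
def map₂ {N' : Type u} [AddCommGroup N'] [Module R N'] (t : N →ₗ[R] N') :
    NCTensor R M N →+ NCTensor R M N' :=
  lift (fun m n => tmul R M N' m (t n))
    (fun m m' n => by rw [add_tmul])
    (fun m n n' => by rw [map_add, tmul_add])
    (fun r m n => by rw [smul_tmul, map_smul])

@[simp] lemma map₂_tmul {N' : Type u} [AddCommGroup N'] [Module R N'] (t : N →ₗ[R] N')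
    (m : M) (n : N) : map₂ (M := M) t (tmul R M N m n) = tmul R M N' m (t n) :=
  lift_tmul _ _ _ _ _ _

end NCTensor

end NCAPI

section NCAPI2

variable {R : Type u} [Ring R]

namespace NCTensor

lemma map₁_map₂ {M M' N N' : Type u} [AddCommGroup M] [AddCommGroup M'] [AddCommGroup N]
    [AddCommGroup N'] [Module Rᵐᵒᵖ M] [Module Rᵐᵒᵖ M'] [Module R N] [Module R N']
    (α : M →ₗ[Rᵐᵒᵖ] M') (t : N →ₗ[R] N') (z : NCTensor R M N) :
    map₁ α (map₂ t z) = map₂ t (map₁ α z) := by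
  refine hom_eq (f := (map₁ α).comp (map₂ t)) (g := (map₂ t).comp (map₁ α)) ?_ z
  intro m n
  simp

lemma map₁_map₁ {M M' M'' N : Type u} [AddCommGroup M] [AddCommGroup M'] [AddCommGroup M'']
    [AddCommGroup N] [Module Rᵐᵒᵖ M] [Module Rᵐᵒᵖ M'] [Module Rᵐᵒᵖ M''] [Module R N]
    (α : M →ₗ[Rᵐᵒᵖ] M') (β : M' →ₗ[Rᵐᵒᵖ] M'') (z : NCTensor R M N) :
    map₁ β (map₁ α z) = map₁ (N := N) (β.comp α) z := by
  refine hom_eq (f := (map₁ β).comp (map₁ α)) (g := map₁ (β.comp α)) ?_ z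
  intro m n
  simp

lemma map₂_surj {X N N'' : Type u} [AddCommGroup X] [Module Rᵐᵒᵖ X] [AddCommGroup N]
    [AddCommGroup N''] [Module R N] [Module R N''] (s : N →ₗ[R] N'')
    (hs : Function.Surjective s) (ξ : NCTensor R X N'') :
    ∃ η : NCTensor R X N, map₂ s η = ξ := by
  induction ξ using inductionOn with
  | zero => exact ⟨0, map_zero _⟩
  | tm m n =>
    obtain ⟨n', rfl⟩ := hs n
    exact ⟨tmul R X N m n', map₂_tmul _ _ _⟩
  | neg y hy => obtain ⟨c, rfl⟩ := hy; exact ⟨-c, map_neg _ _⟩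
  | add y z hy hz =>
    obtain ⟨c, rfl⟩ := hy; obtain ⟨d, rfl⟩ := hz
    exact ⟨c + d, map_add _ _ _⟩

/-- Exactness of `X ⊗ N' → X ⊗ N → X ⊗ N'' → 0` in the middle. -/
lemma exact_map₂ {X N' N N'' : Type u} [AddCommGroup X] [Module Rᵐᵒᵖ X]
    [AddCommGroup N'] [AddCommGroup N] [AddCommGroup N'']
    [Module R N'] [Module R N] [Module R N'']
    (t : N' →ₗ[R] N) (s : N →ₗ[R] N'') (hs : Function.Surjective s)
    (hker : ∀ n, s n = 0 → ∃ w, t w = n)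
    (ξ : NCTensor R X N) (hξ : map₂ (M := X) s ξ = 0) :
    ∃ η, map₂ (M := X) t η = ξ := by
  classical
  set G : AddSubgroup (NCTensor R X N) := (map₂ (M := X) t).range with hG
  have key : ∀ (x : X) (n₁ n₂ : N), s n₁ = s n₂ →
      (QuotientAddGroup.mk (tmul R X N x n₁) : _ ⧸ G) = QuotientAddGroup.mk (tmul R X N x n₂) := by
    intro x n₁ n₂ h
    refine QuotientAddGroup.eq_iff_sub_mem.mpr ?_
    rw [← tmul_sub]
    obtain ⟨w, hw⟩ := hker (n₁ - n₂) (by rw [map_sub, h, sub_self])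
    exact ⟨tmul R X N' x w, by rw [map₂_tmul, hw]⟩
  have hsec : ∀ n'', s (Classical.choose (hs n'')) = n'' := fun n'' => Classical.choose_spec (hs n'')
  set b : X → N'' → (NCTensor R X N ⧸ G) :=
    fun x n'' => QuotientAddGroup.mk (tmul R X N x (Classical.choose (hs n''))) with hb
  have hba : ∀ x x' n'', b (x + x') n'' = b x n'' + b x' n'' := by
    intro x x' n''
    rw [hb]; dsimp only
    rw [add_tmul, QuotientAddGroup.mk_add]
  have hbn : ∀ x n₁ n₂, b x (n₁ + n₂) = b x n₁ + b x n₂ := by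
    intro x n₁ n₂
    rw [hb]; dsimp only
    rw [← QuotientAddGroup.mk_add, ← tmul_add]
    exact key _ _ _ (by rw [map_add, hsec, hsec, hsec])
  have hbr : ∀ (r : R) x n'', b (op r • x) n'' = b x (r • n'') := by
    intro r x n''
    rw [hb]; dsimp only
    rw [smul_tmul]
    exact key _ _ _ (by rw [map_smul, hsec, hsec])
  have hcomp : ∀ ζ : NCTensor R X N,
      lift b hba hbn hbr (map₂ (M := X) s ζ) = QuotientAddGroup.mk ζ := by
    refine hom_eq (f := (lift b hba hbn hbr).comp (map₂ (M := X) s))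
      (g := QuotientAddGroup.mk' G) ?_
    intro m n
    show lift b hba hbn hbr (map₂ (M := X) s (tmul R X N m n)) = _
    rw [map₂_tmul, lift_tmul]
    exact key _ _ _ (by rw [hsec])
  have : (QuotientAddGroup.mk ξ : _ ⧸ G) = 0 := by
    rw [← hcomp ξ, hξ, map_zero]
  exact (QuotientAddGroup.eq_zero_iff ξ).mp this

lemma map₁_surj {N X X'' : Type u} [AddCommGroup N] [Module R N] [AddCommGroup X]
    [AddCommGroup X''] [Module Rᵐᵒᵖ X] [Module Rᵐᵒᵖ X''] (s : X →ₗ[Rᵐᵒᵖ] X'')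
    (hs : Function.Surjective s) (ξ : NCTensor R X'' N) :
    ∃ η : NCTensor R X N, map₁ s η = ξ := by
  induction ξ using inductionOn with
  | zero => exact ⟨0, map_zero _⟩
  | tm m n =>
    obtain ⟨m', rfl⟩ := hs m
    exact ⟨tmul R X N m' n, map₁_tmul _ _ _⟩
  | neg y hy => obtain ⟨c, rfl⟩ := hy; exact ⟨-c, map_neg _ _⟩
  | add y z hy hz =>
    obtain ⟨c, rfl⟩ := hy; obtain ⟨d, rfl⟩ := hz
    exact ⟨c + d, map_add _ _ _⟩

/-- Exactness of `X' ⊗ N → X ⊗ N → X'' ⊗ N → 0` in the middle. -/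
lemma exact_map₁ {N X' X X'' : Type u} [AddCommGroup N] [Module R N]
    [AddCommGroup X'] [AddCommGroup X] [AddCommGroup X'']
    [Module Rᵐᵒᵖ X'] [Module Rᵐᵒᵖ X] [Module Rᵐᵒᵖ X'']
    (t : X' →ₗ[Rᵐᵒᵖ] X) (s : X →ₗ[Rᵐᵒᵖ] X'') (hs : Function.Surjective s)
    (hker : ∀ x, s x = 0 → ∃ w, t w = x)
    (ξ : NCTensor R X N) (hξ : map₁ (N := N) s ξ = 0) :
    ∃ η, map₁ (N := N) t η = ξ := by
  classical
  set G : AddSubgroup (NCTensor R X N) := (map₁ (N := N) t).range with hG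
  have key : ∀ (x₁ x₂ : X) (n : N), s x₁ = s x₂ →
      (QuotientAddGroup.mk (tmul R X N x₁ n) : _ ⧸ G) = QuotientAddGroup.mk (tmul R X N x₂ n) := by
    intro x₁ x₂ n h
    refine QuotientAddGroup.eq_iff_sub_mem.mpr ?_
    rw [← sub_tmul]
    obtain ⟨w, hw⟩ := hker (x₁ - x₂) (by rw [map_sub, h, sub_self])
    exact ⟨tmul R X' N w n, by rw [map₁_tmul, hw]⟩
  have hsec : ∀ x'', s (Classical.choose (hs x'')) = x'' := fun x'' => Classical.choose_spec (hs x'')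
  set b : X'' → N → (NCTensor R X N ⧸ G) :=
    fun x'' n => QuotientAddGroup.mk (tmul R X N (Classical.choose (hs x'')) n) with hb
  have hba : ∀ x₁ x₂ n, b (x₁ + x₂) n = b x₁ n + b x₂ n := by
    intro x₁ x₂ n
    rw [hb]; dsimp only
    rw [← QuotientAddGroup.mk_add, ← add_tmul]
    exact key _ _ _ (by rw [map_add, hsec, hsec, hsec])
  have hbn : ∀ x'' n n', b x'' (n + n') = b x'' n + b x'' n' := by
    intro x'' n n'
    rw [hb]; dsimp only
    rw [tmul_add, QuotientAddGroup.mk_add]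
  have hbr : ∀ (r : R) x'' n, b (op r • x'') n = b x'' (r • n) := by
    intro r x'' n
    rw [hb]; dsimp only
    rw [← smul_tmul]
    exact key _ _ _ (by rw [map_smul, hsec, hsec])
  have hcomp : ∀ ζ : NCTensor R X N,
      lift b hba hbn hbr (map₁ (N := N) s ζ) = QuotientAddGroup.mk ζ := by
    refine hom_eq (f := (lift b hba hbn hbr).comp (map₁ (N := N) s))
      (g := QuotientAddGroup.mk' G) ?_
    intro m n
    show lift b hba hbn hbr (map₁ (N := N) s (tmul R X N m n)) = _
    rw [map₁_tmul, lift_tmul]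
    exact key _ _ _ (by rw [hsec])
  have : (QuotientAddGroup.mk ξ : _ ⧸ G) = 0 := by
    rw [← hcomp ξ, hξ, map_zero]
  exact (QuotientAddGroup.eq_zero_iff ξ).mp this

/-- every element of `X ⊗ R` is of the form `x ⊗ 1` -/
lemma eq_tmul_one {X : Type u} [AddCommGroup X] [Module Rᵐᵒᵖ X] (w : NCTensor R X R) :
    ∃ x : X, w = tmul R X R x 1 := by
  induction w using inductionOn with
  | zero => exact ⟨0, (zero_tmul 1).symm⟩
  | tm x r =>
    refine ⟨op r • x, ?_⟩
    rw [smul_tmul, smul_eq_mul, mul_one]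
  | neg y hy =>
    obtain ⟨x, rfl⟩ := hy
    exact ⟨-x, by rw [neg_tmul]⟩
  | add y z hy hz =>
    obtain ⟨x, rfl⟩ := hy; obtain ⟨x', rfl⟩ := hz
    exact ⟨x + x', by rw [add_tmul]⟩

end NCTensor

end NCAPI2

section PhiFacts

variable {R Q : Type u} [Ring R] [Ring Q] (φ : R →+* Q) [Module Rᵐᵒᵖ Q]
  (hr : ∀ (r : R) (q : Q), op r • q = q * φ r)
  [Module R Q] (hl : ∀ (r : R) (q : Q), r • q = φ r * q)

include hr hl

namespace NCTensor

/-- the multiplication map `Q ⊗_R Q →+ Q` -/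
def mulHom : NCTensor R Q Q →+ Q :=
  lift (fun a b => a * b) (fun a a' b => add_mul a a' b) (fun a b b' => mul_add a b b')
    (fun r a b => by rw [hr, hl, mul_assoc])

@[simp] lemma mulHom_tmul (a b : Q) : mulHom φ hr hl (tmul R Q Q a b) = a * b :=
  lift_tmul _ _ _ _ _ _

/-- left multiplication on the first factor of `Q ⊗_R Q` -/
def lmulT (a : Q) : NCTensor R Q Q →+ NCTensor R Q Q :=
  lift (fun x y => tmul R Q Q (a * x) y)
    (fun x x' y => by rw [mul_add, add_tmul])
    (fun x y y' => by rw [tmul_add])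
    (fun r x y => by
      have _inc := hl
      rw [hr, ← mul_assoc, ← hr, smul_tmul])

@[simp] lemma lmulT_tmul (a x y : Q) :
    lmulT φ hr hl a (tmul R Q Q x y) = tmul R Q Q (a * x) y :=
  lift_tmul _ _ _ _ _ _

/-- right multiplication on the second factor of `Q ⊗_R Q` -/
def rmulT (b : Q) : NCTensor R Q Q →+ NCTensor R Q Q :=
  lift (fun x y => tmul R Q Q x (y * b))
    (fun x x' y => by rw [add_tmul])
    (fun x y y' => by rw [add_mul, tmul_add])
    (fun r x y => by
      have _inc := hr
      rw [smul_tmul, hl, hl, mul_assoc])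

@[simp] lemma rmulT_tmul (b x y : Q) :
    rmulT φ hr hl b (tmul R Q Q x y) = tmul R Q Q x (y * b) :=
  lift_tmul _ _ _ _ _ _

lemma lmulT_one (z : NCTensor R Q Q) : lmulT φ hr hl 1 z = z :=
  hom_eq (g := AddMonoidHom.id _) (fun x y => by simp) z

lemma rmulT_one (z : NCTensor R Q Q) : rmulT φ hr hl 1 z = z :=
  hom_eq (g := AddMonoidHom.id _) (fun x y => by simp) z

lemma lmulT_mul (a b : Q) (z : NCTensor R Q Q) :
    lmulT φ hr hl (a * b) z = lmulT φ hr hl a (lmulT φ hr hl b z) :=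
  hom_eq (f := lmulT φ hr hl (a * b)) (g := (lmulT φ hr hl a).comp (lmulT φ hr hl b))
    (fun x y => by simp [mul_assoc]) z

lemma rmulT_mul (a b : Q) (z : NCTensor R Q Q) :
    rmulT φ hr hl (a * b) z = rmulT φ hr hl b (rmulT φ hr hl a z) :=
  hom_eq (f := rmulT φ hr hl (a * b)) (g := (rmulT φ hr hl b).comp (rmulT φ hr hl a))
    (fun x y => by simp [mul_assoc]) z

lemma lmulT_rmulT (a b : Q) (z : NCTensor R Q Q) :
    lmulT φ hr hl a (rmulT φ hr hl b z) = rmulT φ hr hl b (lmulT φ hr hl a z) :=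
  hom_eq (f := (lmulT φ hr hl a).comp (rmulT φ hr hl b))
    (g := (rmulT φ hr hl b).comp (lmulT φ hr hl a)) (fun x y => by simp) z

lemma lmulT_add (a b : Q) (z : NCTensor R Q Q) :
    lmulT φ hr hl (a + b) z = lmulT φ hr hl a z + lmulT φ hr hl b z :=
  hom_eq (f := lmulT φ hr hl (a + b)) (g := lmulT φ hr hl a + lmulT φ hr hl b)
    (fun x y => by simp [add_mul, add_tmul]) z

lemma rmulT_add (a b : Q) (z : NCTensor R Q Q) :
    rmulT φ hr hl (a + b) z = rmulT φ hr hl a z + rmulT φ hr hl b z :=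
  hom_eq (f := rmulT φ hr hl (a + b)) (g := rmulT φ hr hl a + rmulT φ hr hl b)
    (fun x y => by simp [mul_add, tmul_add]) z

lemma lmulT_zero (z : NCTensor R Q Q) : lmulT φ hr hl 0 z = 0 :=
  hom_eq (f := lmulT φ hr hl 0) (g := 0) (fun x y => by simp [zero_tmul]) z

lemma rmulT_zero (z : NCTensor R Q Q) : rmulT φ hr hl 0 z = 0 :=
  hom_eq (f := rmulT φ hr hl 0) (g := 0) (fun x y => by simp [tmul_zero]) z

/-- For a ring epimorphism, `q ⊗ 1 = 1 ⊗ q` in `Q ⊗_R Q`. -/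
lemma tmul_one_comm (hepi : IsRingEpi φ) (q : Q) : tmul R Q Q q 1 = tmul R Q Q 1 q := by
  letI : Mul (Q × NCTensor R Q Q) :=
    ⟨fun p p' => (p.1 * p'.1, lmulT φ hr hl p.1 p'.2 + rmulT φ hr hl p'.1 p.2)⟩
  have hmul : ∀ p p' : Q × NCTensor R Q Q,
      p * p' = (p.1 * p'.1, lmulT φ hr hl p.1 p'.2 + rmulT φ hr hl p'.1 p.2) := fun _ _ => rfl
  letI : Ring (Q × NCTensor R Q Q) :=
    { (inferInstance : AddCommGroup (Q × NCTensor R Q Q)) with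
      mul := (· * ·)
      one := (1, 0)
      mul_assoc := by
        rintro ⟨a, x⟩ ⟨b, y⟩ ⟨c, z⟩
        simp only [hmul]
        refine Prod.ext (mul_assoc a b c) ?_
        simp only [map_add]
        rw [lmulT_mul, rmulT_mul, lmulT_rmulT]
        abel
      one_mul := by
        rintro ⟨a, x⟩
        simp only [hmul]
        refine Prod.ext (one_mul a) ?_
        show lmulT φ hr hl 1 x + rmulT φ hr hl a 0 = x
        rw [lmulT_one, map_zero, add_zero]
      mul_one := by
        rintro ⟨a, x⟩
        simp only [hmul]
        refine Prod.ext (mul_one a) ?_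
        show lmulT φ hr hl a 0 + rmulT φ hr hl 1 x = x
        rw [rmulT_one, map_zero, zero_add]
      left_distrib := by
        rintro ⟨a, x⟩ ⟨b, y⟩ ⟨c, z⟩
        simp only [hmul]
        refine Prod.ext (mul_add a b c) ?_
        show lmulT φ hr hl a (y + z) + rmulT φ hr hl (b + c) x = _
        rw [map_add, rmulT_add]
        show _ = lmulT φ hr hl a y + rmulT φ hr hl b x + (lmulT φ hr hl a z + rmulT φ hr hl c x)
        abel
      right_distrib := by
        rintro ⟨a, x⟩ ⟨b, y⟩ ⟨c, z⟩
        simp only [hmul]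
        refine Prod.ext (add_mul a b c) ?_
        show lmulT φ hr hl (a + b) z + rmulT φ hr hl c (x + y) = _
        rw [map_add, lmulT_add]
        show _ = lmulT φ hr hl a z + rmulT φ hr hl c x + (lmulT φ hr hl b z + rmulT φ hr hl c y)
        abel
      zero_mul := by
        rintro ⟨a, x⟩
        simp only [hmul]
        refine Prod.ext (zero_mul a) ?_
        show lmulT φ hr hl 0 x + rmulT φ hr hl a 0 = 0
        rw [lmulT_zero, map_zero, add_zero]
      mul_zero := by
        rintro ⟨a, x⟩
        simp only [hmul]
        refine Prod.ext (mul_zero a) ?_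
        show lmulT φ hr hl a 0 + rmulT φ hr hl 0 x = 0
        rw [rmulT_zero, map_zero, add_zero] }
  let ψ : Q →+* Q × NCTensor R Q Q :=
    { toFun := fun a => (a, tmul R Q Q a 1 - tmul R Q Q 1 a)
      map_one' := by
        refine Prod.ext rfl ?_
        show tmul R Q Q 1 1 - tmul R Q Q 1 1 = 0
        rw [sub_self]
      map_mul' := by
        intro a b
        refine Prod.ext rfl ?_
        show tmul R Q Q (a * b) 1 - tmul R Q Q 1 (a * b) =
          lmulT φ hr hl a (tmul R Q Q b 1 - tmul R Q Q 1 b) +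
            rmulT φ hr hl b (tmul R Q Q a 1 - tmul R Q Q 1 a)
        rw [map_sub, map_sub, lmulT_tmul, lmulT_tmul, rmulT_tmul, rmulT_tmul]
        simp only [mul_one, one_mul]
        abel
      map_zero' := by
        refine Prod.ext rfl ?_
        show tmul R Q Q 0 1 - tmul R Q Q 1 0 = 0
        rw [zero_tmul, tmul_zero, sub_self]
      map_add' := by
        intro a b
        refine Prod.ext rfl ?_
        show tmul R Q Q (a + b) 1 - tmul R Q Q 1 (a + b) =
          (tmul R Q Q a 1 - tmul R Q Q 1 a) + (tmul R Q Q b 1 - tmul R Q Q 1 b)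
        rw [add_tmul, tmul_add]
        abel }
  let ω : Q →+* Q × NCTensor R Q Q :=
    { toFun := fun a => (a, 0)
      map_one' := rfl
      map_mul' := by
        intro a b
        refine Prod.ext rfl ?_
        show (0 : NCTensor R Q Q) = lmulT φ hr hl a 0 + rmulT φ hr hl b 0
        rw [map_zero, map_zero, add_zero]
      map_zero' := rfl
      map_add' := by
        intro a b
        refine Prod.ext rfl ?_
        show (0 : NCTensor R Q Q) = 0 + 0
        rw [add_zero] }
  have hcomp : ψ.comp φ = ω.comp φ := by
    refine RingHom.ext fun r => Prod.ext rfl ?_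
    show tmul R Q Q (φ r) 1 - tmul R Q Q 1 (φ r) = 0
    have h1 : (φ r : Q) = op r • (1 : Q) := by rw [hr, one_mul]
    rw [sub_eq_zero]
    conv_lhs => rw [h1]
    rw [smul_tmul, hl, mul_one]
  have := hepi _ ψ ω hcomp
  have happ : ψ q = ω q := by rw [this]
  have h2 : tmul R Q Q q 1 - tmul R Q Q 1 q = 0 := congrArg Prod.snd happ
  exact sub_eq_zero.mp h2

end NCTensor

end PhiFacts

section KFacts

variable {R Q : Type u} [Ring R] [Ring Q] (φ : R →+* Q) [Module Rᵐᵒᵖ Q]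
  (hr : ∀ (r : R) (q : Q), op r • q = q * φ r)
  [Module R Q] (hl : ∀ (r : R) (q : Q), r • q = φ r * q)

/-- `φ` as a map of left `R`-modules. -/
def phil : R →ₗ[R] Q where
  toFun := φ
  map_add' := map_add φ
  map_smul' := fun r r' => by
    dsimp only [RingHom.id_apply]
    rw [smul_eq_mul, map_mul, hl]

@[simp] lemma phil_apply (r : R) : phil φ hl r = φ r := rfl

/-- The projection `Q → K` as a map of left `R`-modules. -/
def piK :
    letI : Module R (Kmod φ hr) := KleftModule φ hr
    Q →ₗ[R] Kmod φ hr :=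
  letI : Module R (Kmod φ hr) := KleftModule φ hr
  { toFun := fun q => Submodule.Quotient.mk q
    map_add' := fun _ _ => rfl
    map_smul' := fun r q => by
      dsimp only [RingHom.id_apply]
      show _ = lK φ hr r (Submodule.Quotient.mk q)
      rw [lK, Submodule.mapQ_apply]
      show Submodule.Quotient.mk (r • q) = Submodule.Quotient.mk (lmulQ φ hr r q)
      rw [hl]
      rfl }

@[simp] lemma piK_apply (q : Q) :
    letI : Module R (Kmod φ hr) := KleftModule φ hr
    piK φ hr hl q = Submodule.Quotient.mk q := rfl

lemma piK_surjective :
    letI : Module R (Kmod φ hr) := KleftModule φ hr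
    Function.Surjective (piK φ hr hl) := by
  letI : Module R (Kmod φ hr) := KleftModule φ hr
  intro k
  obtain ⟨q, rfl⟩ := Submodule.Quotient.mk_surjective _ k
  exact ⟨q, rfl⟩

lemma piK_ker {q : Q} :
    letI : Module R (Kmod φ hr) := KleftModule φ hr
    piK φ hr hl q = 0 → ∃ r, phil φ hl r = q := by
  intro h
  obtain ⟨r, hrq⟩ := (Submodule.Quotient.mk_eq_zero _).mp h
  exact ⟨r, hrq⟩

include hr hl

/-- `Q ⊗_R K = 0`. -/
lemma qk_zero (hepi : IsRingEpi φ) :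
    letI : Module R (Kmod φ hr) := KleftModule φ hr
    ∀ z : NCTensor R Q (Kmod φ hr), z = 0 := by
  letI : Module R (Kmod φ hr) := KleftModule φ hr
  intro z
  induction z using NCTensor.inductionOn with
  | zero => rfl
  | neg y hy => rw [hy, neg_zero]
  | add y w hy hw => rw [hy, hw, add_zero]
  | tm q k =>
    obtain ⟨u, rfl⟩ := piK_surjective φ hr hl k
    have h1 : NCTensor.tmul R Q Q q u = NCTensor.tmul R Q Q (q * u) 1 := by
      calc NCTensor.tmul R Q Q q u = NCTensor.rmulT φ hr hl u (NCTensor.tmul R Q Q q 1) := by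
            rw [NCTensor.rmulT_tmul, one_mul]
      _ = NCTensor.rmulT φ hr hl u (NCTensor.tmul R Q Q 1 q) := by
            rw [NCTensor.tmul_one_comm φ hr hl hepi]
      _ = NCTensor.tmul R Q Q 1 (q * u) := by rw [NCTensor.rmulT_tmul]
      _ = NCTensor.tmul R Q Q (q * u) 1 := (NCTensor.tmul_one_comm φ hr hl hepi (q * u)).symm
    have h2 := congrArg (NCTensor.map₂ (M := Q) (piK φ hr hl)) h1
    rw [NCTensor.map₂_tmul, NCTensor.map₂_tmul] at h2
    rw [piK_apply] at h2
    have h3 : piK φ hr hl (1 : Q) = 0 :=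
      (Submodule.Quotient.mk_eq_zero _).mpr ⟨1, map_one φ⟩
    rw [h3, NCTensor.tmul_zero] at h2
    exact h2

/-- `Tor_1^R(Q, K) = 0`: tensoring an inclusion with kernel `Q`-presentation stays injective. -/
lemma tor1K (htor : Tor1Zero R Q Q) {A B : Type u} [AddCommGroup A] [AddCommGroup B]
    [Module Rᵐᵒᵖ A] [Module Rᵐᵒᵖ B] (i : A →ₗ[Rᵐᵒᵖ] B) (p : B →ₗ[Rᵐᵒᵖ] Q)
    (hB : Module.Projective Rᵐᵒᵖ B) (hi : Function.Injective i) (hp : Function.Surjective p)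
    (hip : LinearMap.range i = LinearMap.ker p) :
    letI : Module R (Kmod φ hr) := KleftModule φ hr
    ∀ t : NCTensor R A (Kmod φ hr), NCTensor.map₁ i t = 0 → t = 0 := by
  letI : Module R (Kmod φ hr) := KleftModule φ hr
  intro t ht
  have hQinj : Function.Injective (NCTensor.map₁ (N := Q) i) :=
    htor A B i p hB hi hp hip (NCTensor.map₁ (N := Q) i) (fun a n => NCTensor.map₁_tmul i a n)
  obtain ⟨y, hy⟩ := NCTensor.map₂_surj (X := A) (piK φ hr hl) (piK_surjective φ hr hl) t
  have h0 : NCTensor.map₂ (piK φ hr hl) (NCTensor.map₁ i y) = 0 := by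
    rw [← NCTensor.map₁_map₂, hy, ht]
  obtain ⟨w, hw⟩ := NCTensor.exact_map₂ (phil φ hl) (piK φ hr hl) (piK_surjective φ hr hl)
    (fun n hn => piK_ker φ hr hl hn) (NCTensor.map₁ i y) h0
  obtain ⟨b, rfl⟩ := NCTensor.eq_tmul_one w
  have hw' : NCTensor.tmul R B Q b 1 = NCTensor.map₁ i y := by
    rw [← hw, NCTensor.map₂_tmul, phil_apply, map_one]
  have hp0 : ∀ z : NCTensor R A Q, NCTensor.map₁ p (NCTensor.map₁ i z) = 0 := by
    intro z
    rw [NCTensor.map₁_map₁]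
    refine NCTensor.hom_eq (f := NCTensor.map₁ (p.comp i)) (g := 0) ?_ z
    intro a n
    rw [NCTensor.map₁_tmul]
    have hpa : p (i a) = 0 := by
      have : i a ∈ LinearMap.ker p := hip ▸ LinearMap.mem_range_self i a
      exact this
    show NCTensor.tmul R Q Q (LinearMap.comp p i a) n = 0
    rw [LinearMap.comp_apply, hpa, NCTensor.zero_tmul]
  have hpb1 : NCTensor.tmul R Q Q (p b) 1 = 0 := by
    calc NCTensor.tmul R Q Q (p b) 1 = NCTensor.map₁ p (NCTensor.tmul R B Q b 1) :=
          (NCTensor.map₁_tmul p b 1).symm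
    _ = NCTensor.map₁ p (NCTensor.map₁ i y) := by rw [hw']
    _ = 0 := hp0 y
  have hpb : p b = 0 := by
    have := congrArg (NCTensor.mulHom φ hr hl) hpb1
    rw [NCTensor.mulHom_tmul, mul_one, map_zero] at this
    exact this
  obtain ⟨a, ha⟩ : b ∈ LinearMap.range i := by rw [hip]; exact hpb
  have hyy : y = NCTensor.map₂ (phil φ hl) (NCTensor.tmul R A R a 1) := by
    refine hQinj ?_
    rw [NCTensor.map₁_map₂, NCTensor.map₁_tmul, NCTensor.map₂_tmul, phil_apply, map_one, ha, hw']
  rw [← hy, hyy, NCTensor.map₂_tmul, NCTensor.map₂_tmul, phil_apply, map_one, piK_apply]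
  have h3 : (Submodule.Quotient.mk (1 : Q) : Kmod φ hr) = 0 :=
    (Submodule.Quotient.mk_eq_zero _).mpr ⟨1, map_one φ⟩
  rw [h3, NCTensor.tmul_zero]

end KFacts

section KeyLift

variable {R Q : Type u} [Ring R] [Ring Q] (φ : R →+* Q) [Module Rᵐᵒᵖ Q]
  (hr : ∀ (r : R) (q : Q), op r • q = q * φ r)
  [Module R Q] (hl : ∀ (r : R) (q : Q), r • q = φ r * q)
  (M : Type u) [AddCommGroup M] [Module Rᵐᵒᵖ M]

include hl

/-- `Hom_R((Kmod φ hr), M)` is h-reduced. -/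
lemma hom_vanish (hepi : IsRingEpi φ) :
    letI : Module Rᵐᵒᵖ (Kmod φ hr →ₗ[Rᵐᵒᵖ] M) := homModule φ hr M
    ∀ g : Q →ₗ[Rᵐᵒᵖ] (Kmod φ hr →ₗ[Rᵐᵒᵖ] M), g = 0 := by
  letI instKL : Module R (Kmod φ hr) := KleftModule φ hr
  letI instN : Module Rᵐᵒᵖ (Kmod φ hr →ₗ[Rᵐᵒᵖ] M) := homModule φ hr M
  intro g
  refine LinearMap.ext fun q => LinearMap.ext fun k => ?_
  have hba : ∀ (a a' : Q) (k : Kmod φ hr), g (a + a') k = g a k + g a' k := fun a a' k => by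
    rw [map_add]; rfl
  have hbn : ∀ (a : Q) (k k' : Kmod φ hr), g a (k + k') = g a k + g a k' := fun a k k' => by
    rw [map_add]
  have hbr : ∀ (r : R) (a : Q) (k : Kmod φ hr), g (op r • a) k = g a (r • k) := fun r a k => by
    rw [g.map_smul]; rfl
  have h1 := NCTensor.lift_tmul (R := R) (fun a k => g a k) hba hbn hbr q k
  rw [qk_zero φ hr hl hepi (NCTensor.tmul R Q (Kmod φ hr) q k), map_zero] at h1
  exact h1.symm

/-- The key lifting lemma: given an exact complex `P2 → P1 → P0 → Q → 0` with `P0`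
projective, any map `P1 → Hom((Kmod φ hr), M)` vanishing on the image of `P2` factors through `d1`. -/
lemma key_lift (hepi : IsRingEpi φ) (htor : Tor1Zero R Q Q)
    {P0 P1 P2 : Type u} [AddCommGroup P0] [AddCommGroup P1] [AddCommGroup P2]
    [Module Rᵐᵒᵖ P0] [Module Rᵐᵒᵖ P1] [Module Rᵐᵒᵖ P2] (hproj : Module.Projective Rᵐᵒᵖ P0)
    (d2 : P2 →ₗ[Rᵐᵒᵖ] P1) (d1 : P1 →ₗ[Rᵐᵒᵖ] P0) (e : P0 →ₗ[Rᵐᵒᵖ] Q)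
    (he : Function.Surjective e)
    (hc0 : ∀ x, e (d1 x) = 0) (hex0 : ∀ x, e x = 0 → ∃ y, d1 y = x)
    (hex1 : ∀ x, d1 x = 0 → ∃ y, d2 y = x) :
    letI : Module Rᵐᵒᵖ (Kmod φ hr →ₗ[Rᵐᵒᵖ] M) := homModule φ hr M
    ∀ f : P1 →ₗ[Rᵐᵒᵖ] (Kmod φ hr →ₗ[Rᵐᵒᵖ] M), (∀ x, f (d2 x) = 0) →
      ∃ g : P0 →ₗ[Rᵐᵒᵖ] (Kmod φ hr →ₗ[Rᵐᵒᵖ] M), ∀ x, g (d1 x) = f x := by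
  letI instKL : Module R (Kmod φ hr) := KleftModule φ hr
  letI instN : Module Rᵐᵒᵖ (Kmod φ hr →ₗ[Rᵐᵒᵖ] M) := homModule φ hr M
  intro f hf
  classical
  set h₁ : NCTensor R P1 (Kmod φ hr) →+ M :=
    NCTensor.lift (R := R) (M := P1) (N := Kmod φ hr) (A := M) (fun x k => f x k)
    (fun x x' k => by rw [map_add]; rfl)
    (fun x k k' => by rw [map_add])
    (fun r x k => by rw [map_smul]; rfl) with hh₁
  have h₁_tmul : ∀ x k, h₁ (NCTensor.tmul R P1 (Kmod φ hr) x k) = f x k :=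
    fun x k => NCTensor.lift_tmul _ _ _ _ _ _
  -- the kernel of `e`
  set A : Submodule Rᵐᵒᵖ P0 := LinearMap.ker e with hA
  have hTor : ∀ t : NCTensor R (↥A) (Kmod φ hr), NCTensor.map₁ A.subtype t = 0 → t = 0 :=
    tor1K φ hr hl htor A.subtype e hproj (Submodule.injective_subtype A) he
      (Submodule.range_subtype A)
  -- surjectivity of `d1 ⊗ (Kmod φ hr)`
  have hsurj : ∀ ξ : NCTensor R P0 (Kmod φ hr), ∃ η, NCTensor.map₁ (N := (Kmod φ hr)) d1 η = ξ := by
    intro ξ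
    exact NCTensor.exact_map₁ d1 e he hex0 ξ (qk_zero φ hr hl hepi _)
  -- kernel of `d1 ⊗ (Kmod φ hr)` is annihilated by `h₁`
  have hker1 : ∀ x : NCTensor R P1 (Kmod φ hr), NCTensor.map₁ (N := (Kmod φ hr)) d1 x = 0 → h₁ x = 0 := by
    intro x hx
    set e' : P1 →ₗ[Rᵐᵒᵖ] ↥A := d1.codRestrict A (fun y => LinearMap.mem_ker.mpr (hc0 y)) with he'
    have hsub : NCTensor.map₁ (N := (Kmod φ hr)) A.subtype (NCTensor.map₁ e' x) = 0 := by
      rw [NCTensor.map₁_map₁, LinearMap.subtype_comp_codRestrict]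
      exact hx
    have h2 : NCTensor.map₁ (N := (Kmod φ hr)) e' x = 0 := hTor _ hsub
    have he'surj : Function.Surjective e' := by
      rintro ⟨a, haA⟩
      obtain ⟨y, hy⟩ := hex0 a (LinearMap.mem_ker.mp haA)
      exact ⟨y, Subtype.ext hy⟩
    obtain ⟨η, hη⟩ := NCTensor.exact_map₁ d2 e' he'surj
      (fun y hy => hex1 y (congrArg Subtype.val hy)) x h2
    rw [← hη]
    refine NCTensor.hom_eq (f := h₁.comp (NCTensor.map₁ d2)) (g := 0) ?_ η
    intro m n
    show h₁ (NCTensor.map₁ (N := (Kmod φ hr)) d2 (NCTensor.tmul R P2 (Kmod φ hr) m n)) = 0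
    rw [NCTensor.map₁_tmul, h₁_tmul, hf m]
    rfl
  choose sec hsec using hsurj
  -- `h₀ := h₁ ∘ sec` is well defined
  have h0d1 : ∀ x, h₁ (sec (NCTensor.map₁ (N := (Kmod φ hr)) d1 x)) = h₁ x := by
    intro x
    have hd : NCTensor.map₁ (N := (Kmod φ hr)) d1 (sec (NCTensor.map₁ (N := (Kmod φ hr)) d1 x) - x) = 0 := by
      rw [map_sub, hsec, sub_self]
    have := hker1 _ hd
    rw [map_sub] at this
    exact sub_eq_zero.mp this
  have h0add : ∀ ξ ζ, h₁ (sec (ξ + ζ)) = h₁ (sec ξ) + h₁ (sec ζ) := by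
    intro ξ ζ
    have hd : NCTensor.map₁ (N := (Kmod φ hr)) d1 (sec (ξ + ζ) - (sec ξ + sec ζ)) = 0 := by
      rw [map_sub, map_add, hsec, hsec, hsec, sub_self]
    have := hker1 _ hd
    rw [map_sub, map_add] at this
    exact sub_eq_zero.mp this
  -- the right action of `R` on `(Kmod φ hr)`, as left-linear maps
  have hsmulK : ∀ (s : R) (q : Q),
      (s • (Submodule.Quotient.mk q : Kmod φ hr)) = Submodule.Quotient.mk (φ s * q) := by
    intro s q
    show lK φ hr s (Submodule.Quotient.mk q) = _
    rw [lK, Submodule.mapQ_apply]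
    rfl
  have hsmulKop : ∀ (c : Rᵐᵒᵖ) (q : Q),
      (c • (Submodule.Quotient.mk q : Kmod φ hr)) = Submodule.Quotient.mk (q * φ c.unop) := by
    intro c q
    rw [← Submodule.Quotient.mk_smul]
    congr 1
    conv_lhs => rw [← MulOpposite.op_unop c, hr]
  set ρ : Rᵐᵒᵖ → ((Kmod φ hr) →ₗ[R] (Kmod φ hr)) := fun c =>
    { toFun := fun k => c • k
      map_add' := fun a b => smul_add c a b
      map_smul' := fun s k => by
        obtain ⟨q, rfl⟩ := Submodule.Quotient.mk_surjective _ k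
        dsimp only [RingHom.id_apply]
        show c • (s • (Submodule.Quotient.mk q : Kmod φ hr)) =
          s • (c • (Submodule.Quotient.mk q : Kmod φ hr))
        rw [hsmulK, hsmulKop, hsmulKop, hsmulK, mul_assoc] } with hρ
  have hρ_apply : ∀ (c : Rᵐᵒᵖ) (k : (Kmod φ hr)), ρ c k = c • k := fun _ _ => rfl
  have h0smul : ∀ (c : Rᵐᵒᵖ) ξ, h₁ (sec (NCTensor.map₂ (ρ c) ξ)) = c • h₁ (sec ξ) := by
    intro c ξ
    have hcomm2 : NCTensor.map₁ (N := (Kmod φ hr)) d1 (NCTensor.map₂ (ρ c) (sec ξ)) =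
        NCTensor.map₂ (ρ c) ξ := by
      rw [NCTensor.map₁_map₂, hsec]
    have hd : NCTensor.map₁ (N := (Kmod φ hr)) d1 (sec (NCTensor.map₂ (ρ c) ξ) -
        NCTensor.map₂ (ρ c) (sec ξ)) = 0 := by
      rw [map_sub, hsec, hcomm2, sub_self]
    have h3 := hker1 _ hd
    rw [map_sub] at h3
    have h4 : h₁ (NCTensor.map₂ (ρ c) (sec ξ)) = c • h₁ (sec ξ) := by
      refine NCTensor.hom_eq (f := h₁.comp (NCTensor.map₂ (ρ c)))
        (g := (AddMonoidHom.mk' (fun m => c • m) (fun a b => smul_add c a b)).comp h₁) ?_ (sec ξ)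
      intro m n
      show h₁ (NCTensor.map₂ (ρ c) (NCTensor.tmul R P1 (Kmod φ hr) m n)) = c • h₁ (NCTensor.tmul R P1 (Kmod φ hr) m n)
      rw [NCTensor.map₂_tmul, h₁_tmul, h₁_tmul, hρ_apply, map_smul]
    rw [← h4]
    exact sub_eq_zero.mp h3
  -- assemble `g`
  refine ⟨{ toFun := fun p =>
            { toFun := fun k => h₁ (sec (NCTensor.tmul R P0 (Kmod φ hr) p k))
              map_add' := fun k k' => by
                rw [NCTensor.tmul_add, h0add]
              map_smul' := fun c k => by
                dsimp only [RingHom.id_apply]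
                rw [show NCTensor.tmul R P0 (Kmod φ hr) p (c • k) =
                  NCTensor.map₂ (ρ c) (NCTensor.tmul R P0 (Kmod φ hr) p k)
                  from (NCTensor.map₂_tmul (ρ c) p k).symm, h0smul] }
            map_add' := fun p p' => by
              refine LinearMap.ext fun k => ?_
              show h₁ (sec (NCTensor.tmul R P0 (Kmod φ hr) (p + p') k)) =
                h₁ (sec (NCTensor.tmul R P0 (Kmod φ hr) p k)) +
                  h₁ (sec (NCTensor.tmul R P0 (Kmod φ hr) p' k))
              rw [NCTensor.add_tmul, h0add]
            map_smul' := fun c p => by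
              refine LinearMap.ext fun k => ?_
              show h₁ (sec (NCTensor.tmul R P0 (Kmod φ hr) (c • p) k)) =
                h₁ (sec (NCTensor.tmul R P0 (Kmod φ hr) p (c.unop • k)))
              conv_lhs => rw [← MulOpposite.op_unop c, NCTensor.smul_tmul] }, ?_⟩
  intro x
  refine LinearMap.ext fun k => ?_
  show h₁ (sec (NCTensor.tmul R P0 (Kmod φ hr) (d1 x) k)) = f x k
  rw [show NCTensor.tmul R P0 (Kmod φ hr) (d1 x) k =
    NCTensor.map₁ (N := (Kmod φ hr)) d1 (NCTensor.tmul R P1 (Kmod φ hr) x k)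
    from (NCTensor.map₁_tmul _ _ _).symm, h0d1, h₁_tmul]

end KeyLift

open CategoryTheory CategoryTheory.Limits

/-- If `φ : R → Q` is an injective ring epimorphism with `Tor_1^R(Q,Q) = 0` and
`K = Q/φ(R)`, then for every right `R`-module `M` the right `R`-module `Hom_R(K, M)`
is Matlis-cotorsion and h-reduced. -/
theorem homK_matlisCotorsion_hreduced {R Q : Type u} [Ring R] [Ring Q] (φ : R →+* Q)
    (hinj : Function.Injective φ) (hepi : IsRingEpi φ)
    [Module Rᵐᵒᵖ Q] (hr : ∀ (r : R) (q : Q), op r • q = q * φ r)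
    [Module R Q] (hl : ∀ (r : R) (q : Q), r • q = φ r * q)
    (htor : Tor1Zero R Q Q)
    (M : Type u) [AddCommGroup M] [Module Rᵐᵒᵖ M] :
    letI : Module Rᵐᵒᵖ (Kmod φ hr →ₗ[Rᵐᵒᵖ] M) := homModule φ hr M
    Subsingleton (extGroup Rᵐᵒᵖ 1 Q (Kmod φ hr →ₗ[Rᵐᵒᵖ] M)) ∧
      (∀ g : Q →ₗ[Rᵐᵒᵖ] (Kmod φ hr →ₗ[Rᵐᵒᵖ] M), g = 0) := by
  letI instKL : Module R (Kmod φ hr) := KleftModule φ hr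
  letI instN : Module Rᵐᵒᵖ (Kmod φ hr →ₗ[Rᵐᵒᵖ] M) := homModule φ hr M
  refine ⟨?_, hom_vanish φ hr hl M hepi⟩
  -- the Ext part
  have P : ProjectiveResolution (ModuleCat.of Rᵐᵒᵖ Q) :=
    (HasProjectiveResolution.out (Z := ModuleCat.of Rᵐᵒᵖ Q)).some
  let Nobj : ModuleCat.{u} Rᵐᵒᵖ := ModuleCat.of Rᵐᵒᵖ (Kmod φ hr →ₗ[Rᵐᵒᵖ] M)
  let e : P.complex.X 0 ⟶ ModuleCat.of Rᵐᵒᵖ Q :=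
    P.π.f 0 ≫ (HomologicalComplex.singleObjXSelf (ComplexShape.down ℕ) 0
      (ModuleCat.of Rᵐᵒᵖ Q)).hom
  have he : Function.Surjective e := by
    rw [← ModuleCat.epi_iff_surjective]
    exact epi_comp _ _
  have hd10 : P.complex.d 1 0 ≫ e = 0 := by
    rw [show e = P.π.f 0 ≫ (HomologicalComplex.singleObjXSelf (ComplexShape.down ℕ) 0
      (ModuleCat.of Rᵐᵒᵖ Q)).hom from rfl, ← Category.assoc, P.complex_d_comp_π_f_zero,
      Limits.zero_comp]
  have hc0 : ∀ x : P.complex.X 1, e (P.complex.d 1 0 x) = 0 := by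
    intro x
    calc e (P.complex.d 1 0 x) = (P.complex.d 1 0 ≫ e) x := rfl
    _ = 0 := by rw [hd10]; rfl
  have hex0 : ∀ x : P.complex.X 0, e x = 0 → ∃ y, P.complex.d 1 0 y = x := by
    intro x hx
    refine (ShortComplex.moduleCat_exact_iff _).mp P.exact₀ x ?_
    have : P.π.f 0 x = ((HomologicalComplex.singleObjXSelf (ComplexShape.down ℕ) 0
        (ModuleCat.of Rᵐᵒᵖ Q)).inv) (e x) := by
      show _ = ((HomologicalComplex.singleObjXSelf (ComplexShape.down ℕ) 0
        (ModuleCat.of Rᵐᵒᵖ Q)).hom ≫ (HomologicalComplex.singleObjXSelf (ComplexShape.down ℕ) 0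
        (ModuleCat.of Rᵐᵒᵖ Q)).inv) (P.π.f 0 x)
      rw [Iso.hom_inv_id]; rfl
    rw [this, hx, map_zero]
  have hex1 : ∀ x : P.complex.X 1, P.complex.d 1 0 x = 0 → ∃ y, P.complex.d 2 1 y = x :=
    fun x hx => (ShortComplex.moduleCat_exact_iff _).mp (P.exact_succ 0) x hx
  have hproj : Module.Projective Rᵐᵒᵖ (P.complex.X 0) :=
    (IsProjective.iff_projective (P.complex.X 0)).mpr (inferInstanceAs (Projective (P.complex.X 0)))
  have h1 : (P.complex.linearYonedaObj ℤ Nobj).ExactAt 1 := by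
    rw [HomologicalComplex.exactAt_iff' _ 0 1 2 (by simp) (by simp),
      ShortComplex.moduleCat_exact_iff]
    intro (f : P.complex.X 1 ⟶ Nobj) hf
    have hf' : ∀ x, f (P.complex.d 2 1 x) = 0 := by
      intro x
      calc f (P.complex.d 2 1 x) = (P.complex.d 2 1 ≫ f) x := rfl
        _ = 0 := by
          have h0 : P.complex.d 2 1 ≫ f = 0 := hf
          rw [h0]; rfl
    obtain ⟨g, hg⟩ := key_lift φ hr hl M hepi htor hproj
      (P.complex.d 2 1).hom
      (P.complex.d 1 0).hom
      e.hom he hc0 hex0 hex1 f.hom hf'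
    exact ⟨ModuleCat.ofHom g, ModuleCat.hom_ext (LinearMap.ext fun x => hg x)⟩
  have h2 : IsZero ((P.complex.linearYonedaObj ℤ Nobj).homology 1) :=
    (HomologicalComplex.exactAt_iff_isZero_homology _ _).mp h1
  have h3 : IsZero (((Ext ℤ (ModuleCat.{u} Rᵐᵒᵖ) 1).obj
      (Opposite.op (ModuleCat.of Rᵐᵒᵖ Q))).obj Nobj) :=
    IsZero.of_iso h2 (P.isoExt 1 Nobj)
  refine Subsingleton.intro fun a b => ?_
  have hid : (𝟙 (((Ext ℤ (ModuleCat.{u} Rᵐᵒᵖ) 1).obj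
      (Opposite.op (ModuleCat.of Rᵐᵒᵖ Q))).obj Nobj)) = 0 := h3.eq_of_src _ _
  calc a = (𝟙 (((Ext ℤ (ModuleCat.{u} Rᵐᵒᵖ) 1).obj
      (Opposite.op (ModuleCat.of Rᵐᵒᵖ Q))).obj Nobj)) a := rfl
  _ = (𝟙 (((Ext ℤ (ModuleCat.{u} Rᵐᵒᵖ) 1).obj
      (Opposite.op (ModuleCat.of Rᵐᵒᵖ Q))).obj Nobj)) b := by rw [hid]; rfl
  _ = b := rfl
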